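/- arXiv:1706.06453 — 2 statements merged into one kernel-verified Lean document; each statement's English description precedes it below -/
import Mathlib

section
/- Let κ be a complex number, y ≥ 1, and let f₁ < f₂ be real numbers. Then the sum of e(Re(κ)·m₂ + Im(κ)·m₁) over pairs of integers (m₁, m₂) with m₁² + m₂² ≤ y and f₁ < arg(m₁ + i·m₂) ≤ f₂ is bounded in absolute value by a constant times y^{1/2} · min{‖Re(κ)‖⁻¹, √y}, where ‖x‖ is the distance from x to the nearest integer. -/
open Complex Finset

/-- Distance from a real number to the nearest integer. -/
noncomputable def nint (x : ℝ) : ℝ := ⨅ n : ℤ, |x - (n : ℝ)|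

/-- `e(x) = exp(2πix)`. -/
noncomputable def eee (x : ℝ) : ℂ := Complex.exp (2 * (Real.pi : ℂ) * Complex.I * (x : ℂ))

/-- `min {t⁻¹, Y}` with the convention `0⁻¹ = +∞`, so the value is `Y` when `t = 0`. -/
noncomputable def mmin (t Y : ℝ) : ℝ := if t = 0 then Y else min t⁻¹ Y

-- Auxiliary lemmas


lemma round_min (x : ℝ) (n : ℤ) : |x - round x| ≤ |x - n| := by
  rcases eq_or_ne n (round x) with rfl | h
  · exact le_rfl
  · have h1 : (1:ℝ) ≤ |((round x : ℤ):ℝ) - (n:ℝ)| := by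
      have hne : (round x : ℤ) - n ≠ 0 := sub_ne_zero.mpr (Ne.symm h)
      have := Int.one_le_abs hne
      calc (1:ℝ) = ((1:ℤ):ℝ) := by norm_num
        _ ≤ ((|round x - n| : ℤ) : ℝ) := by exact_mod_cast this
        _ = |((round x : ℤ):ℝ) - (n:ℝ)| := by push_cast; ring_nf
    have h2 : |x - round x| ≤ 1/2 := abs_sub_round x
    have h3 : |((round x : ℤ):ℝ) - n| ≤ |((round x:ℤ):ℝ) - x| + |x - n| := abs_sub_le _ _ _
    rw [abs_sub_comm ((round x:ℤ):ℝ) x] at h3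
    linarith

lemma nint_eq (x : ℝ) : nint x = |x - round x| := by
  unfold nint
  apply le_antisymm
  · exact ciInf_le ⟨0, by rintro v ⟨n, rfl⟩; positivity⟩ (round x)
  · exact le_ciInf (round_min x)

lemma nint_nonneg (x : ℝ) : 0 ≤ nint x := by rw [nint_eq]; exact abs_nonneg _

lemma sin_pi_ge (x : ℝ) : 2 * nint x ≤ |Real.sin (Real.pi * x)| := by
  rw [nint_eq]
  set n := round x with hn
  have h1 : Real.sin (Real.pi * x) = (-1)^n * Real.sin (Real.pi * (x - n)) := by
    rw [show Real.pi * x = Real.pi * (x - n) + n * Real.pi by ring, Real.sin_add_int_mul_pi]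
  have habs : |x - (n:ℝ)| ≤ 1/2 := abs_sub_round x
  have h2 : |Real.sin (Real.pi * (x - n))| = Real.sin (Real.pi * |x - (n:ℝ)|) := by
    rcases abs_cases (x - (n:ℝ)) with ⟨he, hge0⟩ | ⟨he, hlt⟩
    · rw [he]
      exact abs_of_nonneg (Real.sin_nonneg_of_nonneg_of_le_pi (by positivity)
        (by rw [he] at habs; nlinarith [Real.pi_pos]))
    · rw [he, show Real.pi * -(x - (n:ℝ)) = -(Real.pi * (x - n)) by ring, Real.sin_neg]
      exact abs_of_nonpos (Real.sin_nonpos_of_nonpos_of_neg_pi_le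
        (by nlinarith [Real.pi_pos]) (by nlinarith [Real.pi_pos]))
  rw [h1, abs_mul, h2]
  have : |((-1:ℝ))^n| = 1 := by
    rcases Int.even_or_odd n with he | ho
    · rw [he.neg_one_zpow]; norm_num
    · rw [Odd.neg_one_zpow ho]; norm_num
  rw [this, one_mul]
  have hge := Real.mul_le_sin (x := Real.pi * |x - (n:ℝ)|) (by positivity)
    (by nlinarith [Real.pi_pos])
  have hpi := Real.pi_pos
  calc 2 * |x - (n:ℝ)| = 2 / Real.pi * (Real.pi * |x - (n:ℝ)|) := by field_simp
    _ ≤ Real.sin (Real.pi * |x - (n:ℝ)|) := hge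



lemma abs_eee (x : ℝ) : ‖eee x‖ = 1 := by
  rw [eee, Complex.norm_exp]
  norm_num [Complex.mul_re, Complex.mul_im]

lemma eee_add (x y : ℝ) : eee (x + y) = eee x * eee y := by
  rw [eee, eee, eee, ← Complex.exp_add]
  congr 1
  push_cast
  ring

lemma eee_int_mul (θ : ℝ) (n : ℤ) : eee (θ * n) = eee θ ^ n := by
  rw [eee, eee, ← Complex.exp_int_mul]
  congr 1
  push_cast
  ring

lemma abs_eee_sub_one (θ : ℝ) :
    ‖eee θ - 1‖ = 2 * |Real.sin (Real.pi * θ)| := by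
  have hre : (eee θ).re = Real.cos (2 * Real.pi * θ) := by
    rw [eee, Complex.exp_re]
    norm_num [Complex.mul_re, Complex.mul_im]
  have him : (eee θ).im = Real.sin (2 * Real.pi * θ) := by
    rw [eee, Complex.exp_im]
    norm_num [Complex.mul_re, Complex.mul_im]
  have hsq : (‖eee θ - 1‖)^2 = (2 * |Real.sin (Real.pi * θ)|)^2 := by
    rw [Complex.sq_norm, Complex.normSq_apply, Complex.sub_re, Complex.sub_im, hre, him]
    have h1 := Real.sin_sq_add_cos_sq (Real.pi * θ)
    have h2 : Real.cos (2 * Real.pi * θ) = 2 * Real.cos (Real.pi * θ)^2 - 1 := by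
      rw [show 2 * Real.pi * θ = 2 * (Real.pi * θ) by ring, Real.cos_two_mul]
    have h3 : Real.sin (2 * Real.pi * θ) = 2 * Real.sin (Real.pi * θ) * Real.cos (Real.pi * θ) := by
      rw [show 2 * Real.pi * θ = 2 * (Real.pi * θ) by ring, Real.sin_two_mul]
    rw [h2, h3]
    simp only [Complex.one_re, Complex.one_im]
    rw [mul_pow, _root_.sq_abs]
    nlinarith [h1]
  have h0 : 0 ≤ ‖eee θ - 1‖ := norm_nonneg _
  have h0' : 0 ≤ 2 * |Real.sin (Real.pi * θ)| := by positivity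
  nlinarith [hsq]

lemma sum_eee_Icc_le (θ : ℝ) (h : eee θ ≠ 1) (a b : ℤ) :
    ‖∑ n ∈ Finset.Icc a b, eee θ ^ n‖ ≤ 2 / ‖eee θ - 1‖ := by
  have hw : eee θ ≠ 0 := Complex.exp_ne_zero _
  have hd : eee θ - 1 ≠ 0 := sub_ne_zero.mpr h
  have hdpos : 0 < ‖eee θ - 1‖ := norm_pos_iff.mpr hd
  rw [Int.Icc_eq_finset_map, Finset.sum_map]
  simp only [Function.Embedding.trans_apply, Nat.castEmbedding_apply, addLeftEmbedding_apply]
  have he : ∀ k : ℕ, eee θ ^ (a + (k:ℤ)) = eee θ ^ a * eee θ ^ k := fun k => by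
    rw [zpow_add₀ hw, zpow_natCast]
  calc ‖∑ k ∈ Finset.range (b + 1 - a).toNat, eee θ ^ (a + (k:ℤ))‖
      = ‖eee θ ^ a * ∑ k ∈ Finset.range (b + 1 - a).toNat, eee θ ^ k‖ := by
        rw [Finset.mul_sum]; congr 1; exact Finset.sum_congr rfl fun k _ => he k
    _ = ‖∑ k ∈ Finset.range (b + 1 - a).toNat, eee θ ^ k‖ := by
        rw [norm_mul, norm_zpow, abs_eee, one_zpow, one_mul]
    _ = ‖eee θ ^ (b + 1 - a).toNat - 1‖ / ‖eee θ - 1‖ := by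
        rw [geom_sum_eq h, norm_div]
    _ ≤ 2 / ‖eee θ - 1‖ := by
        gcongr
        calc ‖eee θ ^ (b + 1 - a).toNat - 1‖
            ≤ ‖eee θ ^ (b + 1 - a).toNat‖ + ‖(1:ℂ)‖ :=
              norm_sub_le _ _
          _ ≤ 2 := by rw [norm_pow, abs_eee, one_pow, norm_one]; norm_num

lemma convex_sum_bound (θ : ℝ) (h : eee θ ≠ 1) (S : Finset ℤ)
    (hS : ∀ a b c : ℤ, a ∈ S → c ∈ S → a ≤ b → b ≤ c → b ∈ S) :
    ‖∑ n ∈ S, eee (θ * n)‖ ≤ 2 / ‖eee θ - 1‖ := by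
  have hdpos : 0 < ‖eee θ - 1‖ :=
    norm_pos_iff.mpr (sub_ne_zero.mpr h)
  rcases S.eq_empty_or_nonempty with rfl | hne
  · simp only [Finset.sum_empty, norm_zero]
    positivity
  · have hI : S = Finset.Icc (S.min' hne) (S.max' hne) := by
      ext n
      simp only [Finset.mem_Icc]
      exact ⟨fun hn => ⟨S.min'_le n hn, S.le_max' n hn⟩,
        fun ⟨h1, h2⟩ => hS _ n _ (S.min'_mem hne) (S.max'_mem hne) h1 h2⟩
    rw [hI]
    simp_rw [eee_int_mul]
    exact sum_eee_Icc_le θ h _ _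



noncomputable def gg (m₁ n : ℤ) : ℝ := Complex.arg ((m₁ : ℂ) + (n : ℂ) * Complex.I)

lemma zre (m₁ n : ℤ) : ((m₁ : ℂ) + (n : ℂ) * Complex.I).re = (m₁ : ℝ) := by simp
lemma zim (m₁ n : ℤ) : ((m₁ : ℂ) + (n : ℂ) * Complex.I).im = (n : ℝ) := by simp

lemma zabs (m₁ n : ℤ) :
    ‖(m₁ : ℂ) + (n : ℂ) * Complex.I‖ = Real.sqrt ((m₁:ℝ)^2 + (n:ℝ)^2) := by
  rw [Complex.norm_def, Complex.normSq_apply, zre, zim]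
  ring_nf

lemma ratio_mono {c : ℝ} (hc : c ≠ 0) {s t : ℝ} (hst : s ≤ t) :
    s / Real.sqrt (c^2 + s^2) ≤ t / Real.sqrt (c^2 + t^2) := by
  have hc2 : 0 < c^2 := by positivity
  have hA : 0 < Real.sqrt (c^2 + s^2) := Real.sqrt_pos.mpr (by positivity)
  have hB : 0 < Real.sqrt (c^2 + t^2) := Real.sqrt_pos.mpr (by positivity)
  rcases le_or_gt 0 s with hs | hs
  · rw [div_le_div_iff₀ hA hB]
    have ht : 0 ≤ t := hs.trans hst
    rw [show s * Real.sqrt (c^2+t^2) = Real.sqrt (s^2 * (c^2+t^2)) by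
        rw [Real.sqrt_mul (sq_nonneg s), Real.sqrt_sq hs],
      show t * Real.sqrt (c^2+s^2) = Real.sqrt (t^2 * (c^2+s^2)) by
        rw [Real.sqrt_mul (sq_nonneg t), Real.sqrt_sq ht]]
    apply Real.sqrt_le_sqrt
    have hs2 : s^2 ≤ t^2 := by nlinarith
    nlinarith [mul_le_mul_of_nonneg_left hs2 hc2.le]
  · rcases le_or_gt 0 t with ht | ht
    · calc s / Real.sqrt (c^2+s^2) ≤ 0 := div_nonpos_of_nonpos_of_nonneg hs.le hA.le
        _ ≤ t / Real.sqrt (c^2+t^2) := div_nonneg ht hB.le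
    · rw [div_le_div_iff₀ hA hB]
      rw [show s * Real.sqrt (c^2+t^2) = -Real.sqrt (s^2 * (c^2+t^2)) by
          rw [Real.sqrt_mul (sq_nonneg s), show s^2 = (-s)^2 by ring,
            Real.sqrt_sq (by linarith : (0:ℝ) ≤ -s)]; ring,
        show t * Real.sqrt (c^2+s^2) = -Real.sqrt (t^2 * (c^2+s^2)) by
          rw [Real.sqrt_mul (sq_nonneg t), show t^2 = (-t)^2 by ring,
            Real.sqrt_sq (by linarith : (0:ℝ) ≤ -t)]; ring]
      apply neg_le_neg
      apply Real.sqrt_le_sqrt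
      have ht2 : t^2 ≤ s^2 := by nlinarith
      nlinarith [mul_le_mul_of_nonneg_left ht2 hc2.le]

lemma gg_pos_formula (m₁ : ℤ) (h : 0 < m₁) (n : ℤ) :
    gg m₁ n = Real.arcsin ((n:ℝ) / Real.sqrt ((m₁:ℝ)^2 + (n:ℝ)^2)) := by
  rw [gg, Complex.arg_of_re_nonneg (by rw [zre]; exact_mod_cast h.le), zim, zabs]

lemma gg_mono_nonneg (m₁ : ℤ) (h : 0 ≤ m₁) {a b : ℤ} (hab : a ≤ b) :
    gg m₁ a ≤ gg m₁ b := by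
  rcases h.lt_or_eq with hpos | rfl0
  · rw [gg_pos_formula m₁ hpos, gg_pos_formula m₁ hpos]
    apply Real.monotone_arcsin
    exact ratio_mono (by exact_mod_cast hpos.ne' : ((m₁:ℝ)) ≠ 0) (by exact_mod_cast hab)
  · subst rfl0
    have hpi := Real.pi_pos
    have h0 : gg 0 0 = 0 := by simp [gg]
    have hp : ∀ n : ℤ, 0 < n → gg 0 n = Real.pi / 2 := fun n hn => by
      rw [gg]
      apply Complex.arg_eq_pi_div_two_iff.mpr
      constructor
      · simp
      · simp only [zim]; exact_mod_cast hn
    have hm : ∀ n : ℤ, n < 0 → gg 0 n = -(Real.pi / 2) := fun n hn => by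
      rw [gg]
      apply Complex.arg_eq_neg_pi_div_two_iff.mpr
      constructor
      · simp
      · simp only [zim]; exact_mod_cast hn
    rcases lt_trichotomy a 0 with ha | ha | ha <;> rcases lt_trichotomy b 0 with hb | hb | hb
    · rw [hm a ha, hm b hb]
    · rw [hm a ha, hb, h0]; linarith
    · rw [hm a ha, hp b hb]; linarith
    · omega
    · rw [ha, hb]
    · rw [ha, h0, hp b hb]; linarith
    · omega
    · omega
    · rw [hp a ha, hp b hb]

lemma gg_neg_formula_nonneg (m₁ : ℤ) (h : m₁ < 0) (n : ℤ) (hn : 0 ≤ n) :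
    gg m₁ n = Real.arcsin (-(n:ℝ) / Real.sqrt ((m₁:ℝ)^2 + (n:ℝ)^2)) + Real.pi := by
  rw [gg, Complex.arg_of_re_neg_of_im_nonneg (by rw [zre]; exact_mod_cast h)
    (by rw [zim]; exact_mod_cast hn), zabs]
  congr 2
  simp

lemma gg_neg_formula_neg (m₁ : ℤ) (h : m₁ < 0) (n : ℤ) (hn : n < 0) :
    gg m₁ n = Real.arcsin (-(n:ℝ) / Real.sqrt ((m₁:ℝ)^2 + (n:ℝ)^2)) - Real.pi := by
  rw [gg, Complex.arg_of_re_neg_of_im_neg (by rw [zre]; exact_mod_cast h)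
    (by rw [zim]; exact_mod_cast hn), zabs]
  congr 2
  simp

lemma arcsin_ratio_anti (m₁ : ℤ) (h : m₁ < 0) {a b : ℤ} (hab : a ≤ b) :
    Real.arcsin (-(b:ℝ) / Real.sqrt ((m₁:ℝ)^2 + (b:ℝ)^2)) ≤
      Real.arcsin (-(a:ℝ) / Real.sqrt ((m₁:ℝ)^2 + (a:ℝ)^2)) := by
  apply Real.monotone_arcsin
  have hm : ((m₁:ℝ)) ≠ 0 := by exact_mod_cast h.ne
  have := ratio_mono hm (show -(b:ℝ) ≤ -(a:ℝ) by exact_mod_cast neg_le_neg (show (a:ℝ) ≤ b by exact_mod_cast hab))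
  rwa [neg_sq, neg_sq] at this

lemma gg_between (m₁ : ℤ) {a b c : ℤ} (hab : a ≤ b) (hbc : b ≤ c) (hh : 0 ≤ a ∨ c < 0) :
    (gg m₁ a ≤ gg m₁ b ∧ gg m₁ b ≤ gg m₁ c) ∨
      (gg m₁ c ≤ gg m₁ b ∧ gg m₁ b ≤ gg m₁ a) := by
  rcases le_or_gt 0 m₁ with h | h
  · exact Or.inl ⟨gg_mono_nonneg m₁ h hab, gg_mono_nonneg m₁ h hbc⟩
  · right
    rcases hh with ha | hc
    · have hb : 0 ≤ b := ha.trans hab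
      have hc' : 0 ≤ c := hb.trans hbc
      rw [gg_neg_formula_nonneg m₁ h a ha, gg_neg_formula_nonneg m₁ h b hb,
        gg_neg_formula_nonneg m₁ h c hc']
      constructor
      · linarith [arcsin_ratio_anti m₁ h hbc]
      · linarith [arcsin_ratio_anti m₁ h hab]
    · have hb : b < 0 := hbc.trans_lt hc
      have ha' : a < 0 := hab.trans_lt hb
      rw [gg_neg_formula_neg m₁ h a ha', gg_neg_formula_neg m₁ h b hb,
        gg_neg_formula_neg m₁ h c hc]
      constructor
      · linarith [arcsin_ratio_anti m₁ h hbc]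
      · linarith [arcsin_ratio_anti m₁ h hab]


open Classical in
/-- The sum of `e(Re(κ)m₂ + Im(κ)m₁)` over lattice points `(m₁, m₂)` in the disk of
radius `√y` lying in the sector `f₁ < arg ≤ f₂` is
`O(y^{1/2} · min{‖Re(κ)‖⁻¹, √y})`. -/
theorem sector_exponential_sum_bound :
    ∃ C : ℝ, 0 < C ∧ ∀ κ : ℂ, ∀ y : ℝ, 1 ≤ y → ∀ f₁ f₂ : ℝ, f₁ < f₂ →
      ‖∑ p ∈ ((Finset.Icc (-⌈Real.sqrt y⌉) ⌈Real.sqrt y⌉) ×ˢ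
          (Finset.Icc (-⌈Real.sqrt y⌉) ⌈Real.sqrt y⌉)).filter
            (fun p : ℤ × ℤ => (p.1 : ℝ) ^ 2 + (p.2 : ℝ) ^ 2 ≤ y ∧
              f₁ < Complex.arg ((p.1 : ℂ) + (p.2 : ℂ) * Complex.I) ∧
              Complex.arg ((p.1 : ℂ) + (p.2 : ℂ) * Complex.I) ≤ f₂),
          eee (κ.re * (p.2 : ℝ) + κ.im * (p.1 : ℝ))‖ ≤
        C * Real.sqrt y * mmin (nint κ.re) (Real.sqrt y) := by
  classical
  refine ⟨25, by norm_num, ?_⟩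
  intro κ y hy f₁ f₂ hf
  set θ := κ.re with hθ
  set N := ⌈Real.sqrt y⌉ with hN
  set A := Finset.Icc (-N) N with hA
  have hy0 : (0:ℝ) ≤ y := by linarith
  have hsq1 : 1 ≤ Real.sqrt y := by
    rw [show (1:ℝ) = Real.sqrt 1 by simp]
    exact Real.sqrt_le_sqrt hy
  have hNr : Real.sqrt y ≤ (N:ℝ) := Int.le_ceil _
  have hN1 : (1:ℤ) ≤ N := by exact_mod_cast hsq1.trans hNr
  have hNle : (N:ℝ) ≤ Real.sqrt y + 1 := (Int.ceil_lt_add_one _).le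
  have hcardA : ((A.card : ℝ)) ≤ 2 * Real.sqrt y + 3 := by
    rw [hA, Int.card_Icc]
    have h2 : (((N + 1 - -N).toNat : ℤ) : ℝ) = ((2*N+1 : ℤ) : ℝ) := by
      rw [Int.toNat_of_nonneg (by omega)]; push_cast; ring
    push_cast at h2 ⊢
    rw [h2]
    push_cast
    linarith
  have hcardA5 : ((A.card : ℝ)) ≤ 5 * Real.sqrt y := by linarith
  set B : ℤ → Finset ℤ := fun m₁ => A.filter (fun m₂ : ℤ =>
    ((m₁ : ℝ) ^ 2 + (m₂ : ℝ) ^ 2 ≤ y ∧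
      f₁ < Complex.arg ((m₁ : ℂ) + (m₂ : ℂ) * Complex.I) ∧
      Complex.arg ((m₁ : ℂ) + (m₂ : ℂ) * Complex.I) ≤ f₂)) with hB
  have hsum : (∑ p ∈ (A ×ˢ A).filter
            (fun p : ℤ × ℤ => (p.1 : ℝ) ^ 2 + (p.2 : ℝ) ^ 2 ≤ y ∧
              f₁ < Complex.arg ((p.1 : ℂ) + (p.2 : ℂ) * Complex.I) ∧
              Complex.arg ((p.1 : ℂ) + (p.2 : ℂ) * Complex.I) ≤ f₂),
          eee (θ * (p.2 : ℝ) + κ.im * (p.1 : ℝ)))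
      = ∑ m₁ ∈ A, ∑ m₂ ∈ B m₁, eee (θ * (m₂ : ℝ) + κ.im * (m₁ : ℝ)) := by
    rw [Finset.sum_filter, Finset.sum_product]
    refine Finset.sum_congr rfl fun m₁ _ => ?_
    rw [hB, Finset.sum_filter]
  rw [hsum]
  -- trivial bound
  have htriv : ‖∑ m₁ ∈ A, ∑ m₂ ∈ B m₁, eee (θ * (m₂:ℝ) + κ.im * (m₁:ℝ))‖
      ≤ 25 * Real.sqrt y * Real.sqrt y := by
    calc ‖∑ m₁ ∈ A, ∑ m₂ ∈ B m₁, eee (θ * (m₂:ℝ) + κ.im * (m₁:ℝ))‖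
        ≤ ∑ m₁ ∈ A, ‖∑ m₂ ∈ B m₁, eee (θ * (m₂:ℝ) + κ.im * (m₁:ℝ))‖ :=
          norm_sum_le _ _
      _ ≤ ∑ m₁ ∈ A, (A.card : ℝ) := by
          refine Finset.sum_le_sum fun m₁ _ => ?_
          calc ‖∑ m₂ ∈ B m₁, eee (θ * (m₂:ℝ) + κ.im * (m₁:ℝ))‖
              ≤ ∑ m₂ ∈ B m₁, ‖eee (θ * (m₂:ℝ) + κ.im * (m₁:ℝ))‖ :=
                norm_sum_le _ _
            _ = ((B m₁).card : ℝ) := by simp [abs_eee]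
            _ ≤ (A.card : ℝ) := by
                exact_mod_cast Finset.card_filter_le _ _
      _ = (A.card : ℝ) * (A.card : ℝ) := by
          rw [Finset.sum_const, nsmul_eq_mul]
      _ ≤ (5 * Real.sqrt y) * (5 * Real.sqrt y) := by
          apply mul_le_mul hcardA5 hcardA5 (Nat.cast_nonneg _) (by positivity)
      _ = 25 * Real.sqrt y * Real.sqrt y := by ring
  rcases eq_or_ne (nint θ) 0 with ht0 | ht0
  · rw [mmin, if_pos ht0]
    exact htriv
  · have htpos : 0 < nint θ := (nint_nonneg θ).lt_of_ne (Ne.symm ht0)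
    rw [mmin, if_neg ht0]
    rcases min_cases (nint θ)⁻¹ (Real.sqrt y) with ⟨hmin, _⟩ | ⟨hmin, _⟩
    · rw [hmin]
      -- cancellation bound
      have habs_ge : 4 * nint θ ≤ ‖eee θ - 1‖ := by
        rw [abs_eee_sub_one]
        linarith [sin_pi_ge θ]
      have hne1 : eee θ ≠ 1 := by
        intro hcon
        rw [hcon] at habs_ge
        simp only [sub_self, norm_zero] at habs_ge
        linarith
      have hinner : ∀ m₁ ∈ A,
          ‖∑ m₂ ∈ B m₁, eee (θ * (m₂:ℝ) + κ.im * (m₁:ℝ))‖ ≤ (nint θ)⁻¹ := by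
        intro m₁ _
        have hphase : ∀ m₂ : ℤ, eee (θ * (m₂:ℝ) + κ.im * (m₁:ℝ))
            = eee (κ.im * (m₁:ℝ)) * eee (θ * (m₂:ℝ)) := fun m₂ => by
          rw [show θ * (m₂:ℝ) + κ.im * (m₁:ℝ) = κ.im * (m₁:ℝ) + θ * (m₂:ℝ) by ring, eee_add]
        have hconvneg : ∀ a b c : ℤ, a ∈ (B m₁).filter (fun n => n < 0) →
            c ∈ (B m₁).filter (fun n => n < 0) → a ≤ b → b ≤ c →
            b ∈ (B m₁).filter (fun n => n < 0) := by
          intro a b c hac hcc hab hbc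
          simp only [hB, Finset.mem_filter, hA, Finset.mem_Icc] at hac hcc ⊢
          obtain ⟨⟨⟨haN1, haN2⟩, hda, hga1, hga2⟩, ha0⟩ := hac
          obtain ⟨⟨⟨hcN1, hcN2⟩, hdc, hgc1, hgc2⟩, hc0⟩ := hcc
          have hb0 : b < 0 := hbc.trans_lt hc0
          have hbsq : (b:ℝ)^2 ≤ (a:ℝ)^2 := by
            have h1 : (a:ℝ) ≤ (b:ℝ) := by exact_mod_cast hab
            have h2 : (b:ℝ) < 0 := by exact_mod_cast hb0
            nlinarith
          refine ⟨⟨⟨by omega, by omega⟩, by linarith, ?_, ?_⟩, hb0⟩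
          · rcases gg_between m₁ hab hbc (Or.inr hc0) with ⟨h1, h2⟩ | ⟨h1, h2⟩
            · exact hga1.trans_le h1
            · exact hgc1.trans_le h1
          · rcases gg_between m₁ hab hbc (Or.inr hc0) with ⟨h1, h2⟩ | ⟨h1, h2⟩
            · exact h2.trans hgc2
            · exact h2.trans hga2
        have hconvpos : ∀ a b c : ℤ, a ∈ (B m₁).filter (fun n => ¬ n < 0) →
            c ∈ (B m₁).filter (fun n => ¬ n < 0) → a ≤ b → b ≤ c →
            b ∈ (B m₁).filter (fun n => ¬ n < 0) := by
          intro a b c hac hcc hab hbc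
          simp only [hB, Finset.mem_filter, hA, Finset.mem_Icc, not_lt] at hac hcc ⊢
          obtain ⟨⟨⟨haN1, haN2⟩, hda, hga1, hga2⟩, ha0⟩ := hac
          obtain ⟨⟨⟨hcN1, hcN2⟩, hdc, hgc1, hgc2⟩, hc0⟩ := hcc
          have hb0 : 0 ≤ b := ha0.trans hab
          have hbsq : (b:ℝ)^2 ≤ (c:ℝ)^2 := by
            have h1 : (b:ℝ) ≤ (c:ℝ) := by exact_mod_cast hbc
            have h2 : (0:ℝ) ≤ (b:ℝ) := by exact_mod_cast hb0
            nlinarith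
          refine ⟨⟨⟨by omega, by omega⟩, by linarith, ?_, ?_⟩, hb0⟩
          · rcases gg_between m₁ hab hbc (Or.inl ha0) with ⟨h1, h2⟩ | ⟨h1, h2⟩
            · exact hga1.trans_le h1
            · exact hgc1.trans_le h1
          · rcases gg_between m₁ hab hbc (Or.inl ha0) with ⟨h1, h2⟩ | ⟨h1, h2⟩
            · exact h2.trans hgc2
            · exact h2.trans hga2
        calc ‖∑ m₂ ∈ B m₁, eee (θ * (m₂:ℝ) + κ.im * (m₁:ℝ))‖
            = ‖eee (κ.im * (m₁:ℝ)) * ∑ m₂ ∈ B m₁, eee (θ * (m₂:ℝ))‖ := by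
              rw [Finset.mul_sum]
              congr 1
              exact Finset.sum_congr rfl fun m₂ _ => hphase m₂
          _ = ‖∑ m₂ ∈ B m₁, eee (θ * (m₂:ℝ))‖ := by
              rw [norm_mul, abs_eee, one_mul]
          _ ≤ ‖∑ m₂ ∈ (B m₁).filter (fun n => n < 0), eee (θ * (m₂:ℝ))‖
              + ‖∑ m₂ ∈ (B m₁).filter (fun n => ¬ n < 0), eee (θ * (m₂:ℝ))‖ := by
              conv_lhs => rw [← Finset.sum_filter_add_sum_filter_not (B m₁) (fun n => n < 0)]
              exact norm_add_le _ _
          _ ≤ 2 / ‖eee θ - 1‖ + 2 / ‖eee θ - 1‖ :=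
              add_le_add (convex_sum_bound θ hne1 _ hconvneg) (convex_sum_bound θ hne1 _ hconvpos)
          _ ≤ (nint θ)⁻¹ := by
              have h4 : 0 < 4 * nint θ := by linarith
              have habspos : 0 < ‖eee θ - 1‖ := lt_of_lt_of_le h4 habs_ge
              have : 2 / ‖eee θ - 1‖ + 2 / ‖eee θ - 1‖
                  = 4 / ‖eee θ - 1‖ := by ring
              rw [this]
              calc 4 / ‖eee θ - 1‖ ≤ 4 / (4 * nint θ) :=
                    div_le_div_of_nonneg_left (by norm_num) h4 habs_ge
                _ = (nint θ)⁻¹ := by field_simp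
      calc ‖∑ m₁ ∈ A, ∑ m₂ ∈ B m₁, eee (θ * (m₂:ℝ) + κ.im * (m₁:ℝ))‖
          ≤ ∑ m₁ ∈ A, ‖∑ m₂ ∈ B m₁, eee (θ * (m₂:ℝ) + κ.im * (m₁:ℝ))‖ :=
            norm_sum_le _ _
        _ ≤ ∑ m₁ ∈ A, (nint θ)⁻¹ := Finset.sum_le_sum hinner
        _ = (A.card : ℝ) * (nint θ)⁻¹ := by rw [Finset.sum_const, nsmul_eq_mul]
        _ ≤ 25 * Real.sqrt y * (nint θ)⁻¹ := by
            apply mul_le_mul_of_nonneg_right _ (by positivity)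
            linarith
    · rw [hmin]
      exact htriv
end

section
/- Let p be a nonzero complex number, let c be a nonzero complex number with |c| ≤ 1, let η > 0, and let r, q be complex numbers with q ∈ B_{η|c|}(rc), i.e. |q − rc| ≤ η|c|. Then the Lebesgue area of the intersection B_{η/|p|}(r/p) ∩ B_{η/(|c||p|)}(q/(cp)) is at least (π/3 − √3/2)·(η/|p|)², where B_Δ(a) denotes the closed disk of radius Δ centered at a. -/
open Complex MeasureTheory Metric

/-- Lens area lower bound: if `|q - rc| ≤ η|c|`, `p ≠ 0`, `0 < |c| ≤ 1`, then the
intersection of the disks `B_{η/|p|}(r/p)` and `B_{η/(|c||p|)}(q/(cp))` has Lebesgue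
area at least `(π/3 - √3/2)(η/|p|)²`. -/
theorem lens_area_lower_bound (p c : ℂ) (hp : p ≠ 0) (hc : c ≠ 0)
    (hc1 : ‖c‖ ≤ 1) (η : ℝ) (hη : 0 < η) (r q : ℂ)
    (hq : ‖q - r * c‖ ≤ η * ‖c‖) :
    (Real.pi / 3 - Real.sqrt 3 / 2) * (η / ‖p‖) ^ 2 ≤
      (volume (closedBall (r / p) (η / ‖p‖) ∩
        closedBall (q / (c * p)) (η / (‖c‖ * ‖p‖)))).toReal := by
  have hpabs : 0 < ‖p‖ := norm_pos_iff.mpr hp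
  have hcabs : 0 < ‖c‖ := norm_pos_iff.mpr hc
  set R : ℝ := η / ‖p‖ with hR
  have hRpos : 0 < R := div_pos hη hpabs
  -- distance between centers ≤ R
  have hdist : dist (r / p) (q / (c * p)) ≤ R := by
    rw [Complex.dist_eq]
    have : r / p - q / (c * p) = (r * c - q) / (c * p) := by
      field_simp
    rw [this, norm_div, norm_mul]
    rw [div_le_iff₀ (by positivity)]
    have h1 : ‖r * c - q‖ ≤ η * ‖c‖ := by
      rwa [norm_sub_rev] at hq
    calc ‖r * c - q‖ ≤ η * ‖c‖ := h1
      _ = R * (‖c‖ * ‖p‖) := by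
          rw [hR]; field_simp
  -- second radius ≥ R
  have hrad : R ≤ η / (‖c‖ * ‖p‖) := by
    rw [hR, div_le_div_iff₀ hpabs (by positivity)]
    nlinarith [mul_pos hη hpabs, hc1]
  -- midpoint ball inside the intersection
  set m : ℂ := (r / p + q / (c * p)) / 2 with hm
  have hsub : closedBall m (R / 2) ⊆
      closedBall (r / p) R ∩ closedBall (q / (c * p)) (η / (‖c‖ * ‖p‖)) := by
    intro x hx
    simp only [mem_closedBall] at hx
    have hma : dist m (r / p) ≤ R / 2 := by
      rw [hm, Complex.dist_eq]
      have : (r / p + q / (c * p)) / 2 - r / p = (q / (c * p) - r / p) / 2 := by ring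
      rw [this, norm_div, Complex.norm_two, ← Complex.dist_eq, dist_comm]
      linarith
    have hmb : dist m (q / (c * p)) ≤ R / 2 := by
      rw [hm, Complex.dist_eq]
      have : (r / p + q / (c * p)) / 2 - q / (c * p) = (r / p - q / (c * p)) / 2 := by ring
      rw [this, norm_div, Complex.norm_two, ← Complex.dist_eq]
      linarith
    constructor
    · exact mem_closedBall.2 ((dist_triangle x m (r / p)).trans (by linarith))
    · exact mem_closedBall.2 ((dist_triangle x m (q / (c * p))).trans (by linarith))
  have hvol : volume (closedBall m (R / 2)) ≤
      volume (closedBall (r / p) R ∩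
        closedBall (q / (c * p)) (η / (‖c‖ * ‖p‖))) :=
    measure_mono hsub
  have hfin : volume (closedBall (r / p) R ∩
      closedBall (q / (c * p)) (η / (‖c‖ * ‖p‖))) < ⊤ :=
    lt_of_le_of_lt (measure_mono Set.inter_subset_left)
      (measure_closedBall_lt_top)
  have hvr : (volume (closedBall m (R / 2))).toReal = Real.pi * (R / 2) ^ 2 := by
    rw [Complex.volume_closedBall, ENNReal.toReal_mul, ← ENNReal.ofReal_pow (by positivity),
      ENNReal.toReal_ofReal (by positivity)]
    simp [Real.coe_toNNReal', Real.pi_pos.le, mul_comm]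
  have htr : (volume (closedBall m (R / 2))).toReal ≤
      (volume (closedBall (r / p) R ∩
        closedBall (q / (c * p)) (η / (‖c‖ * ‖p‖)))).toReal :=
    ENNReal.toReal_mono hfin.ne hvol
  rw [hvr] at htr
  refine le_trans ?_ htr
  have hsqrt3 : (1 : ℝ) ≤ Real.sqrt 3 := by
    rw [show (1:ℝ) = Real.sqrt 1 from (Real.sqrt_one).symm]
    exact Real.sqrt_le_sqrt (by norm_num)
  have hpi4 : Real.pi ≤ 4 := Real.pi_le_four
  have hR2 : (0:ℝ) < R ^ 2 := by positivity
  have : Real.pi / 3 - Real.sqrt 3 / 2 ≤ Real.pi / 4 := by nlinarith [Real.pi_pos]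
  calc (Real.pi / 3 - Real.sqrt 3 / 2) * R ^ 2 ≤ (Real.pi / 4) * R ^ 2 := by nlinarith
    _ = Real.pi * (R / 2) ^ 2 := by ring
end
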